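/- With C, K, t as in the sharpness construction (c = (k+1/2)𝟙, K = [1/2, 2k+1/2]ⁿ, t(z) = 1 − ‖z−c‖_∞/k, fibers Euclidean balls of radius t(z)), let S = C ∩ (ℤⁿ × ℝ^d) and V₀ = {k, k+1}ⁿ. Then for every y = (z, x) ∈ S there exists a closed halfspace H ⊆ ℝ^{n+d} with y ∈ H such that H ∩ (V₀ × ℝ^d) contains at most one fiber {v} × ℝ^d with v ∈ V₀; consequently h_S(y) ≤ v_d·((1 − 1/(2k))^d + T), where T = Σ_{z ∈ (K∩ℤⁿ)\V₀} t(z)^d. -/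

import Mathlib

open MeasureTheory Set Metric
open scoped ENNReal

/-- The center `c = (k + 1/2)(1,…,1)` of the sharpness construction. -/
noncomputable def constrCenter (n : ℕ) (k : ℕ) : Fin n → ℝ := fun _ => (k : ℝ) + 1 / 2

/-- The box `K = [1/2, 2k + 1/2]ⁿ`. -/
def constrK (n : ℕ) (k : ℕ) : Set (Fin n → ℝ) :=
  {z | ∀ i, 1 / 2 ≤ z i ∧ z i ≤ 2 * (k : ℝ) + 1 / 2}

/-- The slice radius `t(z) = 1 − ‖z − c‖_∞ / k` (here `Fin n → ℝ` carries the sup norm). -/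
noncomputable def constrT (n : ℕ) (k : ℕ) (z : Fin n → ℝ) : ℝ :=
  1 - (1 / (k : ℝ)) * ‖z - constrCenter n k‖

/-- The sharpness construction body `C`, with Euclidean-ball fibers of radius `t(z)`. -/
noncomputable def constrC (n d : ℕ) (k : ℕ) :
    Set ((Fin n → ℝ) × EuclideanSpace ℝ (Fin d)) :=
  {p | p.1 ∈ constrK n k ∧ ‖p.2‖ ≤ constrT n k p.1}

/-- The mixed-integer volume `H_d(A) = Σ_{z ∈ ℤⁿ} vol_d(A_z)` (Euclidean fibers). -/
noncomputable def mixVolE (n d : ℕ)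
    (A : Set ((Fin n → ℝ) × EuclideanSpace ℝ (Fin d))) : ℝ≥0∞ :=
  ∑' z : Fin n → ℤ,
    volume {x : EuclideanSpace ℝ (Fin d) | ((fun i => (z i : ℝ)), x) ∈ A}

/-- The mixed-integer lattice `ℤⁿ × ℝ^d`. -/
def mixLatticeE (n d : ℕ) : Set ((Fin n → ℝ) × EuclideanSpace ℝ (Fin d)) :=
  {p | ∃ z : Fin n → ℤ, p.1 = fun i => (z i : ℝ)}

/-- The standard bilinear pairing on `ℝⁿ × ℝ^d`. -/
noncomputable def dotPE (n d : ℕ)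
    (a y : (Fin n → ℝ) × EuclideanSpace ℝ (Fin d)) : ℝ :=
  (∑ i, a.1 i * y.1 i) + ∑ j, a.2 j * y.2 j

/-- The mixed-integer halfspace depth. -/
noncomputable def depthE (n d : ℕ) (S : Set ((Fin n → ℝ) × EuclideanSpace ℝ (Fin d)))
    (y : (Fin n → ℝ) × EuclideanSpace ℝ (Fin d)) : ℝ≥0∞ :=
  ⨅ (a : (Fin n → ℝ) × EuclideanSpace ℝ (Fin d)) (c : ℝ) (_ : a ≠ 0)
    (_ : c ≤ dotPE n d a y),
    mixVolE n d (S ∩ {u | c ≤ dotPE n d a u})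

/-- The central integer cube `V₀ = {k, k+1}ⁿ`. -/
def constrV₀ (n : ℕ) (k : ℕ) : Set (Fin n → ℤ) :=
  {v | ∀ i, v i = (k : ℤ) ∨ v i = (k : ℤ) + 1}

namespace ConstrAux

lemma tK_nonneg {n k : ℕ} (hk : 1 ≤ k) {w : Fin n → ℝ} (hw : w ∈ constrK n k) :
    0 ≤ constrT n k w := by
  have hk' : (0:ℝ) < k := by exact_mod_cast Nat.pos_of_ne_zero (by omega)
  have hnorm : ‖w - constrCenter n k‖ ≤ (k:ℝ) := by
    rw [pi_norm_le_iff_of_nonneg hk'.le]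
    intro i
    have h := hw i
    rw [Real.norm_eq_abs, abs_le]
    simp only [Pi.sub_apply, constrCenter]
    constructor <;> [linarith [h.2]; linarith [h.1]]
  have : (1 / (k:ℝ)) * ‖w - constrCenter n k‖ ≤ (1/(k:ℝ)) * k := by
    apply mul_le_mul_of_nonneg_left hnorm (by positivity)
  rw [one_div, inv_mul_cancel₀ hk'.ne'] at this
  simp only [constrT, one_div] at this ⊢
  linarith

lemma dotPE_pair (n d : ℕ) (σ : Fin n → ℝ) (w : Fin n → ℝ) (x : EuclideanSpace ℝ (Fin d)) :
    dotPE n d (σ, (0 : EuclideanSpace ℝ (Fin d))) (w, x) = ∑ i, σ i * w i := by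
  have : ∀ j, (0 : EuclideanSpace ℝ (Fin d)) j * x j = 0 := by intro j; simp
  simp [dotPE, this]

lemma finite_outer (n k : ℕ) :
    {z : Fin n → ℤ | (fun i => (z i : ℝ)) ∈ constrK n k ∧ z ∉ constrV₀ n k}.Finite := by
  apply Set.Finite.subset (Set.Finite.pi (fun i : Fin n => Set.finite_Icc (1:ℤ) (2*k)))
  intro z hz
  simp only [Set.mem_pi, Set.mem_univ, Set.mem_Icc, forall_true_left]
  intro i
  have h := hz.1 i
  have h1 : (0:ℝ) < (z i : ℝ) := lt_of_lt_of_le (by norm_num) h.1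
  have h1' : (0:ℤ) < z i := by exact_mod_cast h1
  have h2 : (z i : ℝ) < 2*(k:ℝ) + 1 := lt_of_le_of_lt h.2 (by norm_num)
  have h2' : (z i : ℤ) < 2*(k:ℤ) + 1 := by exact_mod_cast h2
  omega

end ConstrAux
namespace ConstrAux

open Classical in
lemma fiber_bound (n d k : ℕ) (σ : Fin n → ℝ) (c : ℝ) (z' : Fin n → ℤ) :
    volume {x : EuclideanSpace ℝ (Fin d) |
        ((fun i => (z' i : ℝ)), x) ∈
          (constrC n d k ∩ mixLatticeE n d) ∩ {u | c ≤ dotPE n d (σ, (0 : EuclideanSpace ℝ (Fin d))) u}} ≤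
      if ((fun i => (z' i : ℝ)) ∈ constrK n k ∧ c ≤ ∑ i, σ i * (z' i : ℝ)) then
        ENNReal.ofReal (constrT n k (fun i => (z' i : ℝ)) ^ d) *
          volume (closedBall (0 : EuclideanSpace ℝ (Fin d)) 1)
      else 0 := by
  split_ifs with h
  · rcases le_or_gt 0 (constrT n k (fun i => (z' i : ℝ))) with ht | ht
    · have hvol := MeasureTheory.Measure.addHaar_closedBall' (volume : Measure (EuclideanSpace ℝ (Fin d)))
        (0 : EuclideanSpace ℝ (Fin d)) ht
      rw [finrank_euclideanSpace_fin] at hvol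
      rw [← hvol]
      apply measure_mono
      intro x hx
      rw [mem_closedBall_zero_iff]
      exact hx.1.1.2
    · have : {x : EuclideanSpace ℝ (Fin d) |
        ((fun i => (z' i : ℝ)), x) ∈
          (constrC n d k ∩ mixLatticeE n d) ∩ {u | c ≤ dotPE n d (σ, (0 : EuclideanSpace ℝ (Fin d))) u}} = ∅ := by
        ext x
        simp only [Set.mem_setOf_eq, Set.mem_empty_iff_false, iff_false]
        intro hx
        exact absurd hx.1.1.2 (by linarith [norm_nonneg x])
      rw [this, measure_empty]
      positivity
  · have : {x : EuclideanSpace ℝ (Fin d) |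
        ((fun i => (z' i : ℝ)), x) ∈
          (constrC n d k ∩ mixLatticeE n d) ∩ {u | c ≤ dotPE n d (σ, (0 : EuclideanSpace ℝ (Fin d))) u}} = ∅ := by
      ext x
      simp only [Set.mem_setOf_eq, Set.mem_empty_iff_false, iff_false]
      intro hx
      have h2 := hx.2
      rw [Set.mem_setOf_eq, dotPE_pair] at h2
      exact h (⟨hx.1.1.1, h2⟩)
    rw [this, measure_empty]

end ConstrAux
namespace ConstrAux

open Classical in
lemma key_bound (n d k : ℕ) (hn : 1 ≤ n) (hk : 2 ≤ k)
    (z : Fin n → ℤ) (hzK : (fun i => (z i : ℝ)) ∈ constrK n k)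
    (σ : Fin n → ℝ) (c : ℝ)
    (hσ : ∀ v ∈ constrV₀ n k, c ≤ ∑ i, σ i * (v i : ℝ) → v = z) :
    mixVolE n d ((constrC n d k ∩ mixLatticeE n d) ∩
        {u | c ≤ dotPE n d (σ, (0 : EuclideanSpace ℝ (Fin d))) u}) ≤
      ENNReal.ofReal
        ((volume (closedBall (0 : EuclideanSpace ℝ (Fin d)) 1)).toReal *
          ((1 - 1 / (2 * (k : ℝ))) ^ d +
            ∑' z : {z : Fin n → ℤ //
                (fun i => (z i : ℝ)) ∈ constrK n k ∧ z ∉ constrV₀ n k},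
              constrT n k (fun i => ((z : Fin n → ℤ) i : ℝ)) ^ d)) := by
  classical
  set E := EuclideanSpace ℝ (Fin d)
  set B : ℝ≥0∞ := volume (closedBall (0 : E) 1) with hB
  have hBfin : B ≠ ⊤ := (measure_closedBall_lt_top).ne
  set A : ℝ := (1 - 1 / (2 * (k : ℝ))) ^ d with hA
  have hkpos : (0:ℝ) < k := by exact_mod_cast Nat.pos_of_ne_zero (by omega)
  have hk2 : (2:ℝ) ≤ (k:ℝ) := by exact_mod_cast hk
  have hAnn : 0 ≤ A := by
    apply pow_nonneg
    have : 1 / (2 * (k:ℝ)) ≤ 1 := by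
      rw [div_le_one (by linarith)]; linarith
    linarith
  -- pointwise bound
  have hpt : ∀ z' : Fin n → ℤ,
      volume {x : E | ((fun i => (z' i : ℝ)), x) ∈
          (constrC n d k ∩ mixLatticeE n d) ∩ {u | c ≤ dotPE n d (σ, (0:E)) u}} ≤
        (if z' = z then ENNReal.ofReal A * B else 0) +
        (if ((fun i => (z' i : ℝ)) ∈ constrK n k ∧ z' ∉ constrV₀ n k) then
          ENNReal.ofReal (constrT n k (fun i => (z' i : ℝ)) ^ d) * B else 0) := by
    intro z'
    refine (fiber_bound n d k σ c z').trans ?_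
    split_ifs with h1 h2 h3 h4 h5
    · -- z' = z, z' ∉ V₀ impossible? no: both ifs true; bound by second term
      exact le_add_self
    · -- h1 : in K & halfspace, h2 : z' = z, ¬h3 : z ∈ V₀ (since second if false... )
      -- second if false: ¬(K ∧ ∉V₀). K holds, so z' ∈ V₀. z' = z ∈ V₀.
      subst h2
      have hzV : z' ∈ constrV₀ n k := by
        by_contra hv
        exact h3 ⟨h1.1, hv⟩
      -- bound t ≤ 1 - 1/(2k)
      have htub : constrT n k (fun i => (z' i : ℝ)) ≤ 1 - 1 / (2 * (k:ℝ)) := by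
        have i0 : Fin n := ⟨0, hn⟩
        have hnl : (1:ℝ)/2 ≤ ‖(fun i => (z' i : ℝ)) - constrCenter n k‖ := by
          have := norm_le_pi_norm ((fun i => (z' i : ℝ)) - constrCenter n k) i0
          have habs : ‖((fun i => (z' i : ℝ)) - constrCenter n k) i0‖ = 1/2 := by
            simp only [Pi.sub_apply, constrCenter, Real.norm_eq_abs]
            rcases hzV i0 with h | h <;> rw [h] <;> push_cast
            · rw [abs_of_nonpos (by linarith)]; ring
            · rw [abs_of_nonneg (by linarith)]; ring
          linarith [habs ▸ this]
        simp only [constrT]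
        have : 1 / (k:ℝ) * (1/2) ≤ 1 / (k:ℝ) * ‖(fun i => (z' i : ℝ)) - constrCenter n k‖ :=
          mul_le_mul_of_nonneg_left hnl (by positivity)
        have he : 1 / (k:ℝ) * (1/2) = 1 / (2*(k:ℝ)) := by field_simp
        linarith [he ▸ this]
      have htnn : 0 ≤ constrT n k (fun i => (z' i : ℝ)) := tK_nonneg (by omega) h1.1
      rw [add_zero]
      apply mul_le_mul_left
      exact ENNReal.ofReal_le_ofReal (pow_le_pow_left₀ htnn htub d)
    · -- h1 true, z' ≠ z, second if true
      exact le_add_self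
    · -- h1 true, z' ≠ z, second if false: z' ∈ V₀ (since K holds), so halfspace excluded ⇒ contradiction
      exfalso
      have hzV : z' ∈ constrV₀ n k := by
        by_contra hv
        exact h4 ⟨h1.1, hv⟩
      exact h2 (hσ z' hzV h1.2)
    · exact zero_le
    · exact zero_le
    · exact zero_le
    · exact zero_le
  -- sum the bounds
  have hsum : mixVolE n d ((constrC n d k ∩ mixLatticeE n d) ∩
      {u | c ≤ dotPE n d (σ, (0:E)) u}) ≤
      (∑' z' : Fin n → ℤ, if z' = z then ENNReal.ofReal A * B else 0) +
      (∑' z' : Fin n → ℤ, if ((fun i => (z' i : ℝ)) ∈ constrK n k ∧ z' ∉ constrV₀ n k) then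
          ENNReal.ofReal (constrT n k (fun i => (z' i : ℝ)) ^ d) * B else 0) := by
    rw [← ENNReal.tsum_add]
    exact ENNReal.tsum_le_tsum hpt
  refine hsum.trans ?_
  rw [tsum_ite_eq]
  -- second sum as subtype sum
  haveI : Fintype {z : Fin n → ℤ // (fun i => (z i : ℝ)) ∈ constrK n k ∧ z ∉ constrV₀ n k} :=
    (finite_outer n k).fintype
  have hsub : (∑' z' : Fin n → ℤ, if ((fun i => (z' i : ℝ)) ∈ constrK n k ∧ z' ∉ constrV₀ n k) then
          ENNReal.ofReal (constrT n k (fun i => (z' i : ℝ)) ^ d) * B else 0) =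
      (∑' s : {z : Fin n → ℤ // (fun i => (z i : ℝ)) ∈ constrK n k ∧ z ∉ constrV₀ n k},
          ENNReal.ofReal (constrT n k (fun i => ((s : Fin n → ℤ) i : ℝ)) ^ d)) * B := by
    rw [← ENNReal.tsum_mul_right]
    have hind : (fun z' : Fin n → ℤ =>
        if ((fun i => (z' i : ℝ)) ∈ constrK n k ∧ z' ∉ constrV₀ n k) then
          ENNReal.ofReal (constrT n k (fun i => (z' i : ℝ)) ^ d) * B else 0) =
        Set.indicator {z' : Fin n → ℤ | (fun i => (z' i : ℝ)) ∈ constrK n k ∧ z' ∉ constrV₀ n k}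
          (fun z' => ENNReal.ofReal (constrT n k (fun i => (z' i : ℝ)) ^ d) * B) := by
      funext z'
      simp [Set.indicator_apply]
    rw [hind]
    exact (tsum_subtype _ _).symm
  rw [hsub]
  set T : ℝ := ∑' s : {z : Fin n → ℤ // (fun i => (z i : ℝ)) ∈ constrK n k ∧ z ∉ constrV₀ n k},
      constrT n k (fun i => ((s : Fin n → ℤ) i : ℝ)) ^ d with hT
  have hTnn : 0 ≤ T := tsum_nonneg (fun s => pow_nonneg (tK_nonneg (by omega) s.2.1) d)
  have hofT : (∑' s : {z : Fin n → ℤ // (fun i => (z i : ℝ)) ∈ constrK n k ∧ z ∉ constrV₀ n k},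
      ENNReal.ofReal (constrT n k (fun i => ((s : Fin n → ℤ) i : ℝ)) ^ d)) = ENNReal.ofReal T := by
    rw [hT, tsum_fintype, tsum_fintype]
    exact (ENNReal.ofReal_sum_of_nonneg (fun s _ => pow_nonneg (tK_nonneg (by omega) s.2.1) d)).symm
  rw [hofT]
  rw [ENNReal.ofReal_mul ENNReal.toReal_nonneg, ENNReal.ofReal_toReal hBfin,
    ENNReal.ofReal_add hAnn hTnn, mul_add, mul_comm B (ENNReal.ofReal A),
    mul_comm B (ENNReal.ofReal T)]

end ConstrAux
/-- In the sharpness construction, every point of `S` lies in a closed halfspace meeting at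
most one central fiber, so its depth is at most `v_d·((1 − 1/(2k))^d + T)`. -/
theorem construction_depth_bound (n d k : ℕ) (hn : 1 ≤ n) (hd : 1 ≤ d) (hk : 2 ≤ k) :
    ∀ y ∈ constrC n d k ∩ mixLatticeE n d,
      (∃ (a : (Fin n → ℝ) × EuclideanSpace ℝ (Fin d)) (c : ℝ), a ≠ 0 ∧
        c ≤ dotPE n d a y ∧
        {v : Fin n → ℤ | v ∈ constrV₀ n k ∧
          ∃ x : EuclideanSpace ℝ (Fin d),
            c ≤ dotPE n d a ((fun i => (v i : ℝ)), x)}.Subsingleton) ∧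
      depthE n d (constrC n d k ∩ mixLatticeE n d) y ≤
        ENNReal.ofReal
          ((volume (closedBall (0 : EuclideanSpace ℝ (Fin d)) 1)).toReal *
            ((1 - 1 / (2 * (k : ℝ))) ^ d +
              ∑' z : {z : Fin n → ℤ //
                  (fun i => (z i : ℝ)) ∈ constrK n k ∧ z ∉ constrV₀ n k},
                constrT n k (fun i => ((z : Fin n → ℤ) i : ℝ)) ^ d)) := by
  rintro ⟨w, x⟩ ⟨⟨hwK, hwt⟩, z, hz⟩
  simp only at hz
  subst hz
  -- construct the separating normal vector σ
  obtain ⟨σ, hσne, hσmax⟩ : ∃ σ : Fin n → ℝ, σ ≠ 0 ∧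
      ∀ v ∈ constrV₀ n k, (∑ i, σ i * (z i : ℝ)) ≤ ∑ i, σ i * (v i : ℝ) → v = z := by
    by_cases hzV : z ∈ constrV₀ n k
    · refine ⟨fun i => if z i = (k:ℤ) + 1 then (1:ℝ) else -1, ?_, ?_⟩
      · intro h0
        have := congrFun h0 ⟨0, hn⟩
        simp only [Pi.zero_apply] at this
        split_ifs at this <;> norm_num at this
      · intro v hv hle
        by_contra hne
        obtain ⟨i, hi⟩ := Function.ne_iff.mp hne
        have hlt : (∑ i, (if z i = (k:ℤ) + 1 then (1:ℝ) else -1) * (v i : ℝ)) <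
            ∑ i, (if z i = (k:ℤ) + 1 then (1:ℝ) else -1) * (z i : ℝ) := by
          apply Finset.sum_lt_sum
          · intro j _
            rcases hzV j with hj | hj <;> rcases hv j with hj' | hj' <;>
              simp only [hj, hj'] <;> split_ifs <;> push_cast <;> first | rfl | linarith | omega
          · refine ⟨i, Finset.mem_univ i, ?_⟩
            rcases hzV i with hj | hj <;> rcases hv i with hj' | hj' <;>
              (try (exfalso; exact hi (hj'.trans hj.symm))) <;>
              simp only [hj, hj'] <;> split_ifs <;> push_cast <;> first | linarith | omega
        exact absurd hle (not_le.mpr hlt)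
    · -- z ∉ V₀ : some coordinate is off-center
      obtain ⟨i, hi⟩ : ∃ i, ¬(z i = (k:ℤ) ∨ z i = (k:ℤ) + 1) := by
        by_contra h
        push_neg at h
        exact hzV h
      push_neg at hi
      rcases lt_or_gt_of_ne hi.1 with hlt | hgt
      · -- z i < k, so z i ≤ k - 1 : use σ = -e_i
        refine ⟨fun j => if j = i then (-1:ℝ) else 0, ?_, ?_⟩
        · intro h0
          have := congrFun h0 i
          simp at this
        · intro v hv hle
          exfalso
          have hs : ∀ u : Fin n → ℤ, (∑ j, (if j = i then (-1:ℝ) else 0) * (u j : ℝ)) = -(u i : ℝ) := by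
            intro u
            rw [Finset.sum_eq_single i] <;> simp +contextual
          rw [hs, hs] at hle
          have hvk : (k:ℤ) ≤ v i := by rcases hv i with h | h <;> omega
          have : (v i : ℝ) ≤ (z i : ℝ) := by linarith
          have : v i ≤ z i := by exact_mod_cast this
          omega
      · -- z i > k + 1 : use σ = e_i
        refine ⟨fun j => if j = i then (1:ℝ) else 0, ?_, ?_⟩
        · intro h0
          have := congrFun h0 i
          simp at this
        · intro v hv hle
          exfalso
          have hs : ∀ u : Fin n → ℤ, (∑ j, (if j = i then (1:ℝ) else 0) * (u j : ℝ)) = (u i : ℝ) := by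
            intro u
            rw [Finset.sum_eq_single i] <;> simp +contextual
          rw [hs, hs] at hle
          have hvk : v i ≤ (k:ℤ) + 1 := by rcases hv i with h | h <;> omega
          have : (z i : ℝ) ≤ (v i : ℝ) := hle
          have : z i ≤ v i := by exact_mod_cast this
          omega
  set c : ℝ := ∑ i, σ i * (z i : ℝ) with hc
  have hdot : ∀ x' : EuclideanSpace ℝ (Fin d), ∀ w' : Fin n → ℝ,
      dotPE n d (σ, (0 : EuclideanSpace ℝ (Fin d))) (w', x') = ∑ i, σ i * w' i :=
    fun x' w' => ConstrAux.dotPE_pair n d σ w' x'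
  constructor
  · refine ⟨(σ, 0), c, ?_, ?_, ?_⟩
    · intro h0
      exact hσne (congrArg Prod.fst h0)
    · rw [hdot]
    · intro v hv v' hv'
      have h1 : v = z := by
        obtain ⟨x1, hx1⟩ := hv.2
        rw [hdot] at hx1
        exact hσmax v hv.1 hx1
      have h2 : v' = z := by
        obtain ⟨x2, hx2⟩ := hv'.2
        rw [hdot] at hx2
        exact hσmax v' hv'.1 hx2
      rw [h1, h2]
  · have hle : depthE n d (constrC n d k ∩ mixLatticeE n d) ((fun i => (z i : ℝ)), x) ≤
        mixVolE n d ((constrC n d k ∩ mixLatticeE n d) ∩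
          {u | c ≤ dotPE n d (σ, (0 : EuclideanSpace ℝ (Fin d))) u}) := by
      refine iInf_le_of_le (σ, 0) (iInf_le_of_le c (iInf_le_of_le ?_ (iInf_le_of_le ?_ le_rfl)))
      · intro h0
        exact hσne (congrArg Prod.fst h0)
      · rw [hdot]
    exact hle.trans (ConstrAux.key_bound n d k hn hk z hwK σ c hσmax)
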